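/- Let (G,sigma) be a finite signed graph. If every cut delta(X) (for X a subset of V) contains at least as many positive edges as negative edges, then l(G,sigma) = |E^-(sigma)|. If some cut delta(X) contains strictly more negative edges than positive edges, then l(G,sigma) < |E^-(sigma)|. -/

import Mathlib

open SimpleGraph Finset

/-- A signed graph is balanced if every cycle has sign `+1`. -/
def IsBalanced {V : Type*} (G : SimpleGraph V) (σ : Sym2 V → ℤˣ) : Prop :=
  ∀ (v : V) (w : G.Walk v v), w.IsCycle → (w.edges.map σ).prod = 1

/-- The set of negative edges of a signed graph. -/
def negEdges {V : Type*} (G : SimpleGraph V) (σ : Sym2 V → ℤˣ) : Set (Sym2 V) :=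
  {e | e ∈ G.edgeSet ∧ σ e = -1}

/-- The frustration index: the least number of edges whose deletion leaves a balanced
signed graph. -/
noncomputable def frustIndex {V : Type*} (G : SimpleGraph V) (σ : Sym2 V → ℤˣ) : ℕ :=
  sInf {n | ∃ S : Finset (Sym2 V), ↑S ⊆ G.edgeSet ∧ S.card = n ∧
    IsBalanced (G.deleteEdges ↑S) σ}

/-- The switched signature `σ^ζ`, with `σ^ζ(uv) = ζ(u) * σ(uv) * ζ(v)`. -/
def switch {V : Type*} (σ : Sym2 V → ℤˣ) (ζ : V → ℤˣ) : Sym2 V → ℤˣ := fun e =>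
  Sym2.lift ⟨fun u v => ζ u * ζ v, fun u v => mul_comm (ζ u) (ζ v)⟩ e * σ e

/-- The cut determined by a vertex set `X`: all edges of `G` with exactly one endpoint
in `X`. -/
def cutEdges {V : Type*} (G : SimpleGraph V) (X : Set V) : Set (Sym2 V) :=
  {e | e ∈ G.edgeSet ∧ ∃ u v : V, e = s(u, v) ∧ u ∈ X ∧ v ∉ X}

namespace FrustAux

variable {V : Type*}

/-- The sign of a walk. -/
def wsign {G : SimpleGraph V} {x y : V} (σ : Sym2 V → ℤˣ) (w : G.Walk x y) : ℤˣ :=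
  (w.edges.map σ).prod

@[simp] lemma wsign_nil {G : SimpleGraph V} {x : V} (σ : Sym2 V → ℤˣ) :
    wsign σ (Walk.nil : G.Walk x x) = 1 := rfl

@[simp] lemma wsign_cons {G : SimpleGraph V} {x y z : V} (σ : Sym2 V → ℤˣ)
    (h : G.Adj x y) (p : G.Walk y z) :
    wsign σ (Walk.cons h p) = σ s(x, y) * wsign σ p := by simp [wsign]

@[simp] lemma wsign_append {G : SimpleGraph V} {x y z : V} (σ : Sym2 V → ℤˣ)
    (p : G.Walk x y) (q : G.Walk y z) :
    wsign σ (p.append q) = wsign σ p * wsign σ q := by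
  simp [wsign, Walk.edges_append]

@[simp] lemma wsign_copy {G : SimpleGraph V} {x y x' y' : V} (σ : Sym2 V → ℤˣ)
    (p : G.Walk x y) (hx : x = x') (hy : y = y') :
    wsign σ (p.copy hx hy) = wsign σ p := by simp [wsign]

@[simp] lemma wsign_reverse {G : SimpleGraph V} {x y : V} (σ : Sym2 V → ℤˣ)
    (p : G.Walk x y) : wsign σ p.reverse = wsign σ p := by
  unfold wsign
  rw [Walk.edges_reverse, List.map_reverse, List.prod_reverse]

lemma isPath_loop_eq_nil {G : SimpleGraph V} {v : V} (w : G.Walk v v) (h : w.IsPath) :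
    w = Walk.nil := by
  cases w with
  | nil => rfl
  | cons ha p =>
    rw [Walk.cons_isPath_iff _ _] at h
    exact absurd (Walk.end_mem_support p) h.2

/-- Sign of an edge followed by a path back to the start is 1, in a balanced graph. -/
lemma wsign_cons_path {G : SimpleGraph V} {σ : Sym2 V → ℤˣ} (hb : IsBalanced G σ)
    {u v : V} (ha : G.Adj u v) (q : G.Walk v u) (hq : q.IsPath) :
    wsign σ (Walk.cons ha q) = 1 := by
  classical
  by_cases he : s(u, v) ∈ q.edges
  · -- then q must be the single edge v-u
    cases q with
    | nil => exact absurd rfl ha.ne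
    | cons h2 q2 =>
      rw [Walk.edges_cons, List.mem_cons] at he
      rcases he with he | he
      · -- s(u,v) = s(v,z) forces z = u, then q2 : Walk u u is nil
        rename_i z
        have hz : z = u := by
          rw [Sym2.eq_iff] at he
          rcases he with ⟨h1, h2'⟩ | ⟨h1, h2'⟩
          · exact absurd h1 ha.ne
          · exact h1.symm
        subst hz
        have hq2 : q2 = Walk.nil := isPath_loop_eq_nil q2 ((Walk.cons_isPath_iff _ _).mp hq).1
        subst hq2
        simp only [wsign_cons, wsign_nil, mul_one]
        rw [Sym2.eq_swap]
        exact Int.units_mul_self _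
      · exfalso
        have : v ∈ q2.support := Walk.snd_mem_support_of_mem_edges q2 he
        exact ((Walk.cons_isPath_iff _ _).mp hq).2 this
  · exact hb u (Walk.cons ha q) ((Walk.cons_isCycle_iff q ha).mpr ⟨hq, he⟩)

lemma wsign_bypass [DecidableEq V] {G : SimpleGraph V} {σ : Sym2 V → ℤˣ}
    (hb : IsBalanced G σ)
    {x y : V} (w : G.Walk x y) : wsign σ w.bypass = wsign σ w := by
  induction w with
  | nil => rfl
  | cons ha p ih =>
    rename_i u v z
    simp only [Walk.bypass]
    split_ifs with hs
    · have hspec := Walk.take_spec p.bypass hs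
      have h1 : wsign σ (p.bypass.takeUntil u hs) * wsign σ (p.bypass.dropUntil u hs)
          = wsign σ p.bypass := by
        rw [← wsign_append, hspec]
      have htake : wsign σ (Walk.cons ha (p.bypass.takeUntil u hs)) = 1 :=
        wsign_cons_path hb ha _ ((Walk.bypass_isPath p).takeUntil hs)
      rw [wsign_cons] at htake
      calc wsign σ (p.bypass.dropUntil u hs)
          = (σ s(u, v) * wsign σ (p.bypass.takeUntil u hs)) *
              wsign σ (p.bypass.dropUntil u hs) := by rw [htake, one_mul]
        _ = σ s(u, v) * (wsign σ (p.bypass.takeUntil u hs) *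
              wsign σ (p.bypass.dropUntil u hs)) := by rw [mul_assoc]
        _ = σ s(u, v) * wsign σ p.bypass := by rw [h1]
        _ = σ s(u, v) * wsign σ p := by rw [ih]
        _ = wsign σ (Walk.cons ha p) := (wsign_cons σ ha p).symm
    · rw [wsign_cons, wsign_cons, ih]

/-- Every closed walk in a balanced graph has sign 1. -/
lemma wsign_closed {G : SimpleGraph V} {σ : Sym2 V → ℤˣ} (hb : IsBalanced G σ)
    {v : V} (w : G.Walk v v) : wsign σ w = 1 := by
  classical
  rw [← wsign_bypass hb w, isPath_loop_eq_nil w.bypass (Walk.bypass_isPath w)]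
  rfl

@[simp] lemma switch_mk (σ : Sym2 V → ℤˣ) (ζ : V → ℤˣ) (u v : V) :
    switch σ ζ s(u, v) = ζ u * ζ v * σ s(u, v) := by
  simp [switch]

lemma wsign_switch {G : SimpleGraph V} (σ : Sym2 V → ℤˣ) (ζ : V → ℤˣ)
    {x y : V} (w : G.Walk x y) :
    wsign (switch σ ζ) w = ζ x * ζ y * wsign σ w := by
  induction w with
  | nil => simp [Int.units_mul_self]
  | cons ha p ih =>
    rename_i u v' z
    rw [wsign_cons, wsign_cons, ih, switch_mk]
    have h2 : ζ v' * ζ v' = 1 := Int.units_mul_self _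
    calc ζ u * ζ v' * σ s(u, v') * (ζ v' * ζ z * wsign σ p)
        = ζ u * ζ z * ((ζ v' * ζ v') * (σ s(u, v') * wsign σ p)) := by
          simp only [mul_assoc, mul_comm, mul_left_comm]
      _ = ζ u * ζ z * (σ s(u, v') * wsign σ p) := by rw [h2, one_mul]

lemma isBalanced_switch {G : SimpleGraph V} (σ : Sym2 V → ℤˣ) (ζ : V → ℤˣ) :
    IsBalanced G (switch σ ζ) ↔ IsBalanced G σ := by
  have key : ∀ (τ : Sym2 V → ℤˣ) (ξ : V → ℤˣ) (v : V) (w : G.Walk v v),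
      wsign (switch τ ξ) w = wsign τ w := by
    intro τ ξ v w
    rw [wsign_switch, Int.units_mul_self, one_mul]
  constructor
  · intro h v w hw
    have := h v w hw
    have h2 := key σ ζ v w
    unfold wsign at h2
    rw [← h2]; exact this
  · intro h v w hw
    have := h v w hw
    have h2 := key σ ζ v w
    unfold wsign at h2
    rw [h2]; exact this

/-- Harary: a balanced graph admits a switching making every edge positive. -/
lemma harary {G : SimpleGraph V} {σ : Sym2 V → ℤˣ} (hb : IsBalanced G σ) :
    ∃ ζ : V → ℤˣ, ∀ e ∈ G.edgeSet, switch σ ζ e = 1 := by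
  classical
  have hreach : ∀ v : V, G.Reachable ((G.connectedComponentMk v).out) v := by
    intro v
    exact SimpleGraph.ConnectedComponent.exact (Quot.out_eq (G.connectedComponentMk v))
  set rep : V → V := fun v => (G.connectedComponentMk v).out with hrep
  have hwalk : ∀ v : V, Nonempty (G.Walk (rep v) v) := fun v => (hreach v)
  refine ⟨fun v => wsign σ (hwalk v).some, ?_⟩
  intro e he
  induction e with
  | h u v =>
    rw [mem_edgeSet] at he
    have hru : rep u = rep v := by
      simp only [hrep]
      rw [ConnectedComponent.connectedComponentMk_eq_of_adj he]
    set p := (hwalk u).some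
    set q := (hwalk v).some
    have hclosed : wsign σ (p.append (Walk.cons he (q.reverse.copy rfl hru.symm))) = 1 :=
      wsign_closed hb _
    rw [wsign_append, wsign_cons, wsign_copy, wsign_reverse] at hclosed
    rw [switch_mk]
    calc wsign σ ((hwalk u).some) * wsign σ ((hwalk v).some) * σ s(u, v)
        = wsign σ p * (σ s(u, v) * wsign σ q) := by
          show wsign σ p * wsign σ q * σ s(u, v) = _
          rw [mul_assoc, mul_comm (σ s(u, v))]
      _ = 1 := hclosed


lemma cut_mem_iff (G : SimpleGraph V) (X : Set V) {u v : V} (hE : s(u, v) ∈ G.edgeSet) :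
    s(u, v) ∈ cutEdges G X ↔ ¬(u ∈ X ↔ v ∈ X) := by
  constructor
  · rintro ⟨-, a, b, hab, haX, hbX⟩
    rw [Sym2.eq_iff] at hab
    rcases hab with ⟨rfl, rfl⟩ | ⟨rfl, rfl⟩ <;> tauto
  · intro h
    by_cases hu : u ∈ X
    · have hv : v ∉ X := fun hv => h ⟨fun _ => hv, fun _ => hu⟩
      exact ⟨hE, u, v, rfl, hu, hv⟩
    · have hv : v ∈ X := by tauto
      exact ⟨hE, v, u, Sym2.eq_swap, hv, hu⟩

lemma count_switch [Fintype V] (G : SimpleGraph V) (σ : Sym2 V → ℤˣ) (X : Set V)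
    (ζ : V → ℤˣ) (hζ : ∀ v, ζ v = -1 ↔ v ∈ X) :
    (negEdges G (switch σ ζ)).ncard + {e ∈ cutEdges G X | σ e = -1}.ncard
      = (negEdges G σ).ncard + {e ∈ cutEdges G X | σ e = 1}.ncard := by
  classical
  have hζ1 : ∀ v, v ∉ X → ζ v = 1 := by
    intro v hv
    rcases Int.units_eq_one_or (ζ v) with h | h
    · exact h
    · exact absurd ((hζ v).mp h) hv
  have hprod : ∀ u v : V, ζ u * ζ v = -1 ↔ ¬(u ∈ X ↔ v ∈ X) := by
    intro u v
    by_cases hu : u ∈ X <;> by_cases hv : v ∈ X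
    · rw [(hζ u).mpr hu, (hζ v).mpr hv]
      exact iff_of_false (by decide) (fun h => h (iff_of_true hu hv))
    · rw [(hζ u).mpr hu, hζ1 v hv]
      exact iff_of_true (by decide) (fun h => hv (h.mp hu))
    · rw [hζ1 u hu, (hζ v).mpr hv]
      exact iff_of_true (by decide) (fun h => hu (h.mpr hv))
    · rw [hζ1 u hu, hζ1 v hv]
      exact iff_of_false (by decide) (fun h => h (iff_of_false hu hv))
  have hcutE : ∀ e, e ∈ cutEdges G X → e ∈ G.edgeSet := fun e h => h.1
  set A := {e | e ∈ G.edgeSet ∧ σ e = -1 ∧ e ∉ cutEdges G X} with hA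
  have hAB : negEdges G σ = A ∪ {e ∈ cutEdges G X | σ e = -1} := by
    ext e
    simp only [negEdges, Set.mem_setOf_eq, Set.mem_union, hA, Set.mem_sep_iff]
    constructor
    · rintro ⟨hE, hs⟩
      by_cases hc : e ∈ cutEdges G X
      · exact Or.inr ⟨hc, hs⟩
      · exact Or.inl ⟨hE, hs, hc⟩
    · rintro (⟨hE, hs, -⟩ | ⟨hc, hs⟩)
      · exact ⟨hE, hs⟩
      · exact ⟨hcutE e hc, hs⟩
  have hAC : negEdges G (switch σ ζ) = A ∪ {e ∈ cutEdges G X | σ e = 1} := by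
    ext e
    induction e using Sym2.ind with
    | _ u v =>
      simp only [negEdges, Set.mem_setOf_eq, Set.mem_union, hA, Set.mem_sep_iff, switch_mk]
      constructor
      · rintro ⟨hE, hs⟩
        by_cases hc : s(u, v) ∈ cutEdges G X
        · have hz : ζ u * ζ v = -1 := (hprod u v).mpr ((cut_mem_iff G X hE).mp hc)
          rw [hz] at hs
          refine Or.inr ⟨hc, ?_⟩
          rcases Int.units_eq_one_or (σ s(u, v)) with h | h
          · exact h
          · rw [h] at hs; exact absurd hs (by decide)
        · have hz : ζ u * ζ v = 1 := by
            rcases Int.units_eq_one_or (ζ u * ζ v) with h | h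
            · exact h
            · exact absurd ((cut_mem_iff G X hE).mpr ((hprod u v).mp h)) hc
          rw [hz, one_mul] at hs
          exact Or.inl ⟨hE, hs, hc⟩
      · rintro (⟨hE, hs, hc⟩ | ⟨hc, hs⟩)
        · have hz : ζ u * ζ v = 1 := by
            rcases Int.units_eq_one_or (ζ u * ζ v) with h | h
            · exact h
            · exact absurd ((cut_mem_iff G X hE).mpr ((hprod u v).mp h)) hc
          exact ⟨hE, by rw [hz, one_mul, hs]⟩
        · have hE := hcutE _ hc
          have hz : ζ u * ζ v = -1 := (hprod u v).mpr ((cut_mem_iff G X hE).mp hc)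
          exact ⟨hE, by rw [hz, hs]; decide⟩
  have hdisjB : Disjoint A {e ∈ cutEdges G X | σ e = -1} :=
    Set.disjoint_left.mpr (fun {e} he he' => he.2.2 he'.1)
  have hdisjC : Disjoint A {e ∈ cutEdges G X | σ e = 1} :=
    Set.disjoint_left.mpr (fun {e} he he' => he.2.2 he'.1)
  rw [hAB, hAC, Set.ncard_union_eq hdisjC (Set.toFinite _) (Set.toFinite _),
    Set.ncard_union_eq hdisjB (Set.toFinite _) (Set.toFinite _)]
  omega

lemma mem_frustSet [Fintype V] (G : SimpleGraph V) (σ : Sym2 V → ℤˣ) (ζ : V → ℤˣ) :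
    (negEdges G (switch σ ζ)).ncard ∈ {n | ∃ S : Finset (Sym2 V), ↑S ⊆ G.edgeSet ∧
      S.card = n ∧ IsBalanced (G.deleteEdges ↑S) σ} := by
  classical
  have hfin : (negEdges G (switch σ ζ)).Finite := Set.toFinite _
  refine ⟨hfin.toFinset, ?_, ?_, ?_⟩
  · rw [Set.Finite.coe_toFinset]; exact fun e he => he.1
  · exact (Set.ncard_eq_toFinset_card _ hfin).symm
  · rw [← isBalanced_switch σ ζ]
    intro v w hw
    refine List.prod_eq_one ?_
    intro x hx
    rw [List.mem_map] at hx
    obtain ⟨e, hew, rfl⟩ := hx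
    have heG := w.edges_subset_edgeSet hew
    rw [edgeSet_deleteEdges] at heG
    rcases Int.units_eq_one_or (switch σ ζ e) with h | h
    · exact h
    · exfalso
      apply heG.2
      rw [Set.Finite.coe_toFinset]
      exact ⟨heG.1, h⟩

lemma frust_le [Fintype V] (G : SimpleGraph V) (σ : Sym2 V → ℤˣ) (ζ : V → ℤˣ) :
    frustIndex G σ ≤ (negEdges G (switch σ ζ)).ncard :=
  Nat.sInf_le (mem_frustSet G σ ζ)

lemma switch_one (σ : Sym2 V → ℤˣ) : switch σ (fun _ => 1) = σ := by
  funext e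
  induction e using Sym2.ind with
  | _ u v => rw [switch_mk, one_mul, one_mul]

end FrustAux


open FrustAux

theorem frustIndex_cut_criterion {V : Type*} [Fintype V] (G : SimpleGraph V)
    (σ : Sym2 V → ℤˣ) :
    ((∀ X : Set V,
        {e ∈ cutEdges G X | σ e = -1}.ncard ≤ {e ∈ cutEdges G X | σ e = 1}.ncard) →
      frustIndex G σ = (negEdges G σ).ncard) ∧
    ((∃ X : Set V,
        {e ∈ cutEdges G X | σ e = 1}.ncard < {e ∈ cutEdges G X | σ e = -1}.ncard) →
      frustIndex G σ < (negEdges G σ).ncard) := by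
  classical
  have hub : frustIndex G σ ≤ (negEdges G σ).ncard := by
    have h := frust_le G σ (fun _ => 1)
    rwa [switch_one σ] at h
  constructor
  · intro hcut
    refine le_antisymm hub ?_
    have hne : {n | ∃ S : Finset (Sym2 V), ↑S ⊆ G.edgeSet ∧ S.card = n ∧
        IsBalanced (G.deleteEdges ↑S) σ}.Nonempty :=
      ⟨_, mem_frustSet G σ (fun _ => 1)⟩
    obtain ⟨S, hSsub, hScard, hSbal⟩ := Nat.sInf_mem hne
    obtain ⟨ζ, hζ⟩ := harary hSbal
    have hc := count_switch G σ {v | ζ v = -1} ζ (fun v => Iff.rfl)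
    have hle := hcut {v | ζ v = -1}
    have hsub : negEdges G (switch σ ζ) ⊆ ↑S := by
      intro e he
      by_contra heS
      have heG : e ∈ (G.deleteEdges ↑S).edgeSet := by
        rw [edgeSet_deleteEdges]; exact ⟨he.1, heS⟩
      have h1 := hζ e heG
      rw [he.2] at h1
      exact absurd h1 (by decide)
    have h1 : (negEdges G (switch σ ζ)).ncard ≤ S.card := by
      rw [← Set.ncard_coe_finset]
      exact Set.ncard_le_ncard hsub S.finite_toSet
    have h2 : S.card = frustIndex G σ := hScard
    omega
  · rintro ⟨X, hX⟩
    set ζ : V → ℤˣ := fun v => if v ∈ X then -1 else 1 with hζdef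
    have hζiff : ∀ v, ζ v = -1 ↔ v ∈ X := by
      intro v
      by_cases h : v ∈ X
      · simp [hζdef, h]
      · simp only [hζdef, if_neg h]
        exact iff_of_false (by decide) h
    have hc := count_switch G σ X ζ hζiff
    have hl := frust_le G σ ζ
    omega
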